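/- Let θ : ℝ⁴ → ℝ be smooth with coordinates (w, z, x, y), set F := θ_y, G := θ_x, f := θ_{yz} + θ_{xw} + θ_{xy}² − θ_{xx}θ_{yy}, and let Q = ∂_w∂_x + ∂_z∂_y − θ_{yy}∂_x² − θ_{xx}∂_y² + 2θ_{xy}∂_x∂_y. Then the pair (F, G) satisfies the system (sd_3rd), ∂_x(Q(F)) − ∂_y(Q(G)) = 0 and (∂_w − F_y∂_x + G_y∂_y)Q(G) + (∂_z + F_x∂_x − G_x∂_y)Q(F) = 0, if and only if θ satisfies the null-Kähler equation Q(f) = 0. Moreover the first equation of (sd_3rd) holds identically for this ansatz. -/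

import Mathlib

noncomputable section

/-- Partial derivative of `f` along the `i`-th coordinate direction on `ℝⁿ`.
Coordinates on `ℝ⁴` are `(w, z, x, y) = (0, 1, 2, 3)`. -/
def pd {n : ℕ} (i : Fin n) (f : (Fin n → ℝ) → ℝ) : (Fin n → ℝ) → ℝ :=
  fun x => fderiv ℝ f x (Pi.single i 1)

/-- The operator `Q = ∂_w∂_x + ∂_z∂_y − θ_{yy}∂_x² − θ_{xx}∂_y² + 2θ_{xy}∂_x∂_y`
applied to `h`. -/
def Qth (θ h : (Fin 4 → ℝ) → ℝ) : (Fin 4 → ℝ) → ℝ :=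
  fun x =>
    pd 0 (pd 2 h) x + pd 1 (pd 3 h) x - pd 3 (pd 3 θ) x * pd 2 (pd 2 h) x
      - pd 2 (pd 2 θ) x * pd 3 (pd 3 h) x
      + 2 * pd 2 (pd 3 θ) x * pd 2 (pd 3 h) x

/-- The Plebański expression `f = θ_{yz} + θ_{xw} + θ_{xy}² − θ_{xx}θ_{yy}`. -/
def plebF (θ : (Fin 4 → ℝ) → ℝ) : (Fin 4 → ℝ) → ℝ :=
  fun x =>
    pd 1 (pd 3 θ) x + pd 0 (pd 2 θ) x + (pd 2 (pd 3 θ) x) ^ 2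
      - pd 2 (pd 2 θ) x * pd 3 (pd 3 θ) x

@[fun_prop]
lemma pd_contDiff {n : ℕ} (i : Fin n) {f : (Fin n → ℝ) → ℝ}
    (hf : ContDiff ℝ (⊤ : ℕ∞) f) : ContDiff ℝ (⊤ : ℕ∞) (pd i f) := by
  have h : ContDiff ℝ (⊤ : ℕ∞) (fderiv ℝ f) :=
    hf.fderiv_right (by exact_mod_cast le_refl _)
  exact h.clm_apply contDiff_const

@[fun_prop]
lemma pd_differentiable {n : ℕ} (i : Fin n) {f : (Fin n → ℝ) → ℝ}
    (hf : ContDiff ℝ (⊤ : ℕ∞) f) : Differentiable ℝ (pd i f) :=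
  (pd_contDiff i hf).differentiable (by simp)

lemma pd_comm {n : ℕ} (i j : Fin n) {f : (Fin n → ℝ) → ℝ}
    (hf : ContDiff ℝ (⊤ : ℕ∞) f) (x : Fin n → ℝ) :
    pd i (pd j f) x = pd j (pd i f) x := by
  have hd : Differentiable ℝ f := hf.differentiable (by simp)
  have h1 : ∀ y, HasFDerivAt f (fderiv ℝ f y) y := fun y => (hd y).hasFDerivAt
  have hdf : ContDiff ℝ (⊤ : ℕ∞) (fderiv ℝ f) :=
    hf.fderiv_right (by exact_mod_cast le_refl _)
  have h2 : HasFDerivAt (fderiv ℝ f) (fderiv ℝ (fderiv ℝ f) x) x :=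
    ((hdf.differentiable (by simp)) x).hasFDerivAt
  have hsym := second_derivative_symmetric h1 h2 (Pi.single j 1) (Pi.single i 1)
  have key : ∀ k m : Fin n, pd k (pd m f) x
      = fderiv ℝ (fderiv ℝ f) x (Pi.single k 1) (Pi.single m 1) := by
    intro k m
    show fderiv ℝ (fun y => (fderiv ℝ f y) (Pi.single m 1)) x (Pi.single k 1) = _
    rw [fderiv_clm_apply ((hdf.differentiable (by simp)) x)
      (differentiableAt_const _)]
    simp
  rw [key, key, hsym]

lemma pd_add' {n : ℕ} (i : Fin n) {f g : (Fin n → ℝ) → ℝ} (x : Fin n → ℝ)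
    (hf : DifferentiableAt ℝ f x) (hg : DifferentiableAt ℝ g x) :
    pd i (fun y => f y + g y) x = pd i f x + pd i g x := by
  simp [pd, fderiv_fun_add hf hg]

lemma pd_sub' {n : ℕ} (i : Fin n) {f g : (Fin n → ℝ) → ℝ} (x : Fin n → ℝ)
    (hf : DifferentiableAt ℝ f x) (hg : DifferentiableAt ℝ g x) :
    pd i (fun y => f y - g y) x = pd i f x - pd i g x := by
  simp [pd, fderiv_fun_sub hf hg]

lemma pd_mul' {n : ℕ} (i : Fin n) {f g : (Fin n → ℝ) → ℝ} (x : Fin n → ℝ)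
    (hf : DifferentiableAt ℝ f x) (hg : DifferentiableAt ℝ g x) :
    pd i (fun y => f y * g y) x = f x * pd i g x + g x * pd i f x := by
  simp [pd, fderiv_fun_mul hf hg]

lemma pd_sq' {n : ℕ} (i : Fin n) {f : (Fin n → ℝ) → ℝ} (x : Fin n → ℝ)
    (hf : DifferentiableAt ℝ f x) :
    pd i (fun y => f y ^ 2) x = 2 * f x * pd i f x := by
  have h2 : (fun y => f y ^ 2) = fun y => f y * f y := by funext y; ring
  rw [h2, pd_mul' i x hf hf]; ring

/-- `Q(θ_y) = ∂_y f` for the Plebański expression `f`. -/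
lemma Qth_pd3 (θ : (Fin 4 → ℝ) → ℝ) (hθ : ContDiff ℝ (⊤ : ℕ∞) θ) :
    Qth θ (pd 3 θ) = pd 3 (plebF θ) := by
  funext x
  have hc : pd 3 (pd 2 θ) = pd 2 (pd 3 θ) := funext (pd_comm 3 2 hθ)
  show Qth θ (pd 3 θ) x = pd 3 (fun y => pd 1 (pd 3 θ) y + pd 0 (pd 2 θ) y
      + (pd 2 (pd 3 θ) y) ^ 2 - pd 2 (pd 2 θ) y * pd 3 (pd 3 θ) y) x
  simp (disch := fun_prop) only [pd_sub', pd_add', pd_mul', pd_sq']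
  rw [pd_comm 3 1 (pd_contDiff 3 hθ) x, pd_comm 3 0 (pd_contDiff 2 hθ) x,
    pd_comm 3 2 (pd_contDiff 3 hθ) x, pd_comm 3 2 (pd_contDiff 2 hθ) x, hc]
  show Qth θ (pd 3 θ) x = _
  unfold Qth
  ring

/-- `Q(θ_x) = ∂_x f` for the Plebański expression `f`. -/
lemma Qth_pd2 (θ : (Fin 4 → ℝ) → ℝ) (hθ : ContDiff ℝ (⊤ : ℕ∞) θ) :
    Qth θ (pd 2 θ) = pd 2 (plebF θ) := by
  funext x
  have hc : pd 3 (pd 2 θ) = pd 2 (pd 3 θ) := funext (pd_comm 3 2 hθ)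
  show Qth θ (pd 2 θ) x = pd 2 (fun y => pd 1 (pd 3 θ) y + pd 0 (pd 2 θ) y
      + (pd 2 (pd 3 θ) y) ^ 2 - pd 2 (pd 2 θ) y * pd 3 (pd 3 θ) y) x
  simp (disch := fun_prop) only [pd_sub', pd_add', pd_mul', pd_sq']
  rw [pd_comm 2 1 (pd_contDiff 3 hθ) x, pd_comm 2 0 (pd_contDiff 2 hθ) x]
  show Qth θ (pd 2 θ) x = _
  unfold Qth
  rw [hc, pd_comm 3 2 (pd_contDiff 3 hθ) x]
  ring

lemma plebF_contDiff (θ : (Fin 4 → ℝ) → ℝ) (hθ : ContDiff ℝ (⊤ : ℕ∞) θ) :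
    ContDiff ℝ (⊤ : ℕ∞) (plebF θ) := by
  unfold plebF
  fun_prop

/-- Under the ansatz `F = θ_y`, `G = θ_x`, the pair `(F, G)` solves the system
(sd_3rd) iff `θ` solves the null-Kähler equation `Q(f) = 0`; moreover the first
equation of (sd_3rd) holds identically for this ansatz. -/
theorem sd3rd_ansatz_iff_null_kahler
    (θ : (Fin 4 → ℝ) → ℝ)
    (hθ : ContDiff ℝ (⊤ : ℕ∞) θ) :
    (((∀ x : Fin 4 → ℝ,
        pd 2 (Qth θ (pd 3 θ)) x - pd 3 (Qth θ (pd 2 θ)) x = 0) ∧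
      (∀ x : Fin 4 → ℝ,
        (pd 0 (Qth θ (pd 2 θ)) x
            - pd 3 (pd 3 θ) x * pd 2 (Qth θ (pd 2 θ)) x
            + pd 3 (pd 2 θ) x * pd 3 (Qth θ (pd 2 θ)) x)
          + (pd 1 (Qth θ (pd 3 θ)) x
            + pd 2 (pd 3 θ) x * pd 2 (Qth θ (pd 3 θ)) x
            - pd 2 (pd 2 θ) x * pd 3 (Qth θ (pd 3 θ)) x) = 0)) ↔
      (∀ x : Fin 4 → ℝ, Qth θ (plebF θ) x = 0)) ∧
    (∀ x : Fin 4 → ℝ,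
      pd 2 (Qth θ (pd 3 θ)) x - pd 3 (Qth θ (pd 2 θ)) x = 0) := by
  have hP := plebF_contDiff θ hθ
  have h2 := Qth_pd2 θ hθ
  have h3 := Qth_pd3 θ hθ
  have first : ∀ x : Fin 4 → ℝ,
      pd 2 (Qth θ (pd 3 θ)) x - pd 3 (Qth θ (pd 2 θ)) x = 0 := by
    intro x
    rw [h2, h3, pd_comm 2 3 hP x]
    ring
  have second : ∀ x : Fin 4 → ℝ,
      (pd 0 (Qth θ (pd 2 θ)) x
          - pd 3 (pd 3 θ) x * pd 2 (Qth θ (pd 2 θ)) x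
          + pd 3 (pd 2 θ) x * pd 3 (Qth θ (pd 2 θ)) x)
        + (pd 1 (Qth θ (pd 3 θ)) x
          + pd 2 (pd 3 θ) x * pd 2 (Qth θ (pd 3 θ)) x
          - pd 2 (pd 2 θ) x * pd 3 (Qth θ (pd 3 θ)) x) = Qth θ (plebF θ) x := by
    intro x
    rw [h2, h3, pd_comm 3 2 hθ x, pd_comm 3 2 hP x]
    show _ = Qth θ (plebF θ) x
    unfold Qth
    ring
  refine ⟨⟨fun h x => (second x).symm.trans ((h.2) x), fun h => ⟨first, fun x => (second x).trans (h x)⟩⟩, first⟩
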